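/- The quasi-shuffle product is a coalgebra morphism with respect to deconcatenation: Δ(u * v) = Δ(u) * Δ(v), where the product on K⟨A⟩ ⊗ K⟨A⟩ is componentwise quasi-shuffle. -/

import Mathlib

/-- The deconcatenation coproduct `Δ(w) = Σ_{uv = w} u ⊗ v`, with `K⟨A⟩ ⊗ K⟨A⟩` modelled
as finitely supported functions on pairs of words. -/
noncomputable def deconcat {A : Type} {K : Type} [Field K] (w : List A) :
    (List A × List A) →₀ K :=
  ∑ i ∈ Finset.range (w.length + 1), Finsupp.single (w.take i, w.drop i) 1

/-- Linear extension of the deconcatenation coproduct to `K⟨A⟩`. -/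
noncomputable def deconcatExt {A : Type} {K : Type} [Field K] (x : List A →₀ K) :
    (List A × List A) →₀ K :=
  x.sum fun w c => c • deconcat w

/-- The componentwise quasi-shuffle product on `K⟨A⟩ ⊗ K⟨A⟩`:
`(u₁ ⊗ u₂)(v₁ ⊗ v₂) = (u₁ * v₁) ⊗ (u₂ * v₂)`. -/
noncomputable def pairMul {A : Type} {K : Type} [Field K]
    (m : List A → List A → (List A →₀ K))
    (x y : (List A × List A) →₀ K) : (List A × List A) →₀ K :=
  x.sum fun p c => y.sum fun q d =>
    (m p.1 q.1).sum fun w₁ e => (m p.2 q.2).sum fun w₂ f =>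
      (c * d * e * f) • Finsupp.single (w₁, w₂) 1

section Helpers

variable {A : Type} {K : Type} [Field K]

/-- The "tensor product" of two elements of `K⟨A⟩` as a finsupp on pairs. -/
noncomputable def tens (x y : List A →₀ K) : (List A × List A) →₀ K :=
  x.sum fun w₁ e => y.sum fun w₂ f => (e * f) • Finsupp.single (w₁, w₂) 1

lemma tens_single_single (w₁ w₂ : List A) (e f : K) :
    tens (Finsupp.single w₁ e) (Finsupp.single w₂ f)
      = (e * f) • Finsupp.single (w₁, w₂) 1 := by
  unfold tens
  rw [Finsupp.sum_single_index, Finsupp.sum_single_index]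
  · simp
  · simp [Finsupp.sum_zero_index, Finsupp.sum_fun_zero]

lemma tens_zero_left (y : List A →₀ K) : tens 0 y = 0 := by
  simp [tens, Finsupp.sum_zero_index]

lemma tens_zero_right (x : List A →₀ K) : tens x 0 = 0 := by
  simp [tens, Finsupp.sum_zero_index, Finsupp.sum_fun_zero]

lemma tens_add_left (x x' y : List A →₀ K) :
    tens (x + x') y = tens x y + tens x' y := by
  unfold tens
  apply Finsupp.sum_add_index'
  · intro w; simp [Finsupp.sum_fun_zero]
  · intro w e₁ e₂
    rw [← Finsupp.sum_add]
    apply Finsupp.sum_congr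
    intro w₂ _
    rw [add_mul, add_smul]

lemma tens_add_right (x y y' : List A →₀ K) :
    tens x (y + y') = tens x y + tens x y' := by
  unfold tens
  rw [← Finsupp.sum_add]
  apply Finsupp.sum_congr
  intro w₁ _
  apply Finsupp.sum_add_index'
  · intro w; simp
  · intro w f₁ f₂; rw [mul_add, add_smul]

lemma tens_single_right (x : List A →₀ K) (w : List A) (f : K) :
    tens x (Finsupp.single w f) = x.sum fun w₁ e => (e * f) • Finsupp.single (w₁, w) 1 := by
  unfold tens
  apply Finsupp.sum_congr
  intro w₁ _
  rw [Finsupp.sum_single_index]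
  simp

lemma tens_single_left (y : List A →₀ K) (w : List A) (e : K) :
    tens (Finsupp.single w e) y = y.sum fun w₂ f => (e * f) • Finsupp.single (w, w₂) 1 := by
  unfold tens
  rw [Finsupp.sum_single_index]
  simp [Finsupp.sum_fun_zero]

lemma tens_mapRight (g : List A → List A) (x y : List A →₀ K) :
    tens x (Finsupp.mapDomain g y)
      = Finsupp.mapDomain (Prod.map id g) (tens x y) := by
  induction y using Finsupp.induction_linear with
  | zero => simp [tens_zero_right]
  | add y y' hy hy' =>
      rw [Finsupp.mapDomain_add, tens_add_right, tens_add_right, hy, hy',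
        Finsupp.mapDomain_add]
  | single w f =>
      rw [Finsupp.mapDomain_single]
      induction x using Finsupp.induction_linear with
      | zero => simp [tens_zero_left]
      | add x x' hx hx' =>
          rw [tens_add_left, tens_add_left, hx, hx', Finsupp.mapDomain_add]
      | single w₁ e =>
          rw [tens_single_single, tens_single_single, Finsupp.mapDomain_smul,
            Finsupp.mapDomain_single]
          rfl

lemma tens_mapLeft (g : List A → List A) (x y : List A →₀ K) :
    tens (Finsupp.mapDomain g x) y
      = Finsupp.mapDomain (Prod.map g id) (tens x y) := by
  induction x using Finsupp.induction_linear with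
  | zero => simp [tens_zero_left]
  | add x x' hx hx' =>
      rw [Finsupp.mapDomain_add, tens_add_left, tens_add_left, hx, hx',
        Finsupp.mapDomain_add]
  | single w e =>
      rw [Finsupp.mapDomain_single]
      induction y using Finsupp.induction_linear with
      | zero => simp [tens_zero_right]
      | add y y' hy hy' =>
          rw [tens_add_right, tens_add_right, hy, hy', Finsupp.mapDomain_add]
      | single w₂ f =>
          rw [tens_single_single, tens_single_single, Finsupp.mapDomain_smul,
            Finsupp.mapDomain_single]
          rfl

lemma tens_nil_right (x : List A →₀ K) :
    tens x (Finsupp.single ([] : List A) 1)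
      = Finsupp.mapDomain (fun w => (w, ([] : List A))) x := by
  rw [tens_single_right, Finsupp.mapDomain]
  apply Finsupp.sum_congr
  intro w₁ _
  rw [mul_one, Finsupp.smul_single, smul_eq_mul, mul_one]

variable (m : List A → List A → (List A →₀ K))

lemma pairMul_eq (x y : (List A × List A) →₀ K) :
    pairMul m x y
      = x.sum fun p c => c • y.sum fun q d => d • tens (m p.1 q.1) (m p.2 q.2) := by
  unfold pairMul tens
  apply Finsupp.sum_congr
  intro p _
  rw [Finsupp.smul_sum]
  apply Finsupp.sum_congr
  intro q _
  rw [Finsupp.smul_sum, Finsupp.smul_sum]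
  apply Finsupp.sum_congr
  intro w₁ _
  rw [Finsupp.smul_sum, Finsupp.smul_sum]
  apply Finsupp.sum_congr
  intro w₂ _
  simp only [smul_smul]
  congr 1
  ring

lemma pairMul_single_single (p q : List A × List A) (c d : K) :
    pairMul m (Finsupp.single p c) (Finsupp.single q d)
      = (c * d) • tens (m p.1 q.1) (m p.2 q.2) := by
  rw [pairMul_eq, Finsupp.sum_single_index, Finsupp.sum_single_index, smul_smul]
  · simp
  · simp

lemma pairMul_zero_left (y : (List A × List A) →₀ K) : pairMul m 0 y = 0 := by
  rw [pairMul_eq, Finsupp.sum_zero_index]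

lemma pairMul_zero_right (x : (List A × List A) →₀ K) : pairMul m x 0 = 0 := by
  rw [pairMul_eq]
  simp [Finsupp.sum_zero_index, Finsupp.sum_fun_zero]

lemma pairMul_add_left (x x' y : (List A × List A) →₀ K) :
    pairMul m (x + x') y = pairMul m x y + pairMul m x' y := by
  rw [pairMul_eq, pairMul_eq, pairMul_eq]
  exact Finsupp.sum_add_index' (fun p => zero_smul _ _) (fun p c c' => add_smul _ _ _)

lemma pairMul_add_right (x y y' : (List A × List A) →₀ K) :
    pairMul m x (y + y') = pairMul m x y + pairMul m x y' := by
  rw [pairMul_eq, pairMul_eq, pairMul_eq, ← Finsupp.sum_add]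
  apply Finsupp.sum_congr
  intro p _
  rw [← smul_add]
  congr 1
  exact Finsupp.sum_add_index' (fun q => zero_smul _ _) (fun q d d' => add_smul _ _ _)

end Helpers

section MainLemmas

variable {A : Type} {K : Type} [Field K]
variable (m : List A → List A → (List A →₀ K))

/-- Right unit: multiplying by `[] ⊗ []` is the identity. -/
lemma pairMul_nil_right (hm_right_unit : ∀ u, m u [] = Finsupp.single u 1)
    (x : (List A × List A) →₀ K) :
    pairMul m x (Finsupp.single (([] : List A), ([] : List A)) 1) = x := by
  induction x using Finsupp.induction_linear with
  | zero => exact pairMul_zero_left m _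
  | add x x' hx hx' => rw [pairMul_add_left, hx, hx']
  | single p c =>
      rw [pairMul_single_single]
      simp only [hm_right_unit]
      rw [tens_single_single]
      simp [smul_smul, Finsupp.smul_single]

lemma pairMul_nil_left (hm_left_unit : ∀ v, m [] v = Finsupp.single v 1)
    (y : (List A × List A) →₀ K) :
    pairMul m (Finsupp.single (([] : List A), ([] : List A)) 1) y = y := by
  induction y using Finsupp.induction_linear with
  | zero => exact pairMul_zero_right m _
  | add y y' hy hy' => rw [pairMul_add_right, hy, hy']
  | single q d =>
      rw [pairMul_single_single]
      simp only [hm_left_unit]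
      rw [tens_single_single]
      simp [smul_smul, Finsupp.smul_single]

lemma pairMul_boundary (hm_right_unit : ∀ u, m u [] = Finsupp.single u 1)
    (hm_left_unit : ∀ v, m [] v = Finsupp.single v 1) (u v : List A) :
    pairMul m (Finsupp.single (u, ([] : List A)) (1 : K))
        (Finsupp.single (v, ([] : List A)) 1)
      = Finsupp.mapDomain (fun w => (w, ([] : List A))) (m u v) := by
  rw [pairMul_single_single]
  simp only [hm_right_unit]
  rw [tens_nil_right, one_mul, one_smul]

lemma pairMul_concat_right
    (hm_right_unit : ∀ u, m u [] = Finsupp.single u 1) (a : A) (v : List A)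
    (x : (List A × List A) →₀ K) :
    pairMul m (Finsupp.mapDomain (Prod.map id (· ++ [a])) x)
        (Finsupp.single (v, ([] : List A)) 1)
      = Finsupp.mapDomain (Prod.map id (· ++ [a]))
          (pairMul m x (Finsupp.single (v, ([] : List A)) 1)) := by
  induction x using Finsupp.induction_linear with
  | zero => simp [pairMul_zero_left]
  | add x x' hx hx' =>
      rw [Finsupp.mapDomain_add, pairMul_add_left, hx, hx', pairMul_add_left,
        Finsupp.mapDomain_add]
  | single p c =>
      rw [Finsupp.mapDomain_single, pairMul_single_single, pairMul_single_single]
      have h1 : (Prod.map id (· ++ [a]) p).1 = p.1 := rfl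
      have h2 : (Prod.map id (· ++ [a]) p).2 = p.2 ++ [a] := rfl
      rw [h1, h2, hm_right_unit, hm_right_unit]
      have : (Finsupp.single (p.2 ++ [a]) (1 : K))
          = Finsupp.mapDomain (· ++ [a]) (Finsupp.single p.2 1) := by
        rw [Finsupp.mapDomain_single]
      rw [this, tens_mapRight, Finsupp.mapDomain_smul]

lemma pairMul_concat_left
    (hm_left_unit : ∀ v, m [] v = Finsupp.single v 1) (b : A) (u : List A)
    (y : (List A × List A) →₀ K) :
    pairMul m (Finsupp.single (u, ([] : List A)) 1)
        (Finsupp.mapDomain (Prod.map id (· ++ [b])) y)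
      = Finsupp.mapDomain (Prod.map id (· ++ [b]))
          (pairMul m (Finsupp.single (u, ([] : List A)) 1) y) := by
  induction y using Finsupp.induction_linear with
  | zero => simp [pairMul_zero_right]
  | add y y' hy hy' =>
      rw [Finsupp.mapDomain_add, pairMul_add_right, hy, hy', pairMul_add_right,
        Finsupp.mapDomain_add]
  | single q d =>
      rw [Finsupp.mapDomain_single, pairMul_single_single, pairMul_single_single]
      have h1 : (Prod.map id (· ++ [b]) q).1 = q.1 := rfl
      have h2 : (Prod.map id (· ++ [b]) q).2 = q.2 ++ [b] := rfl
      rw [h1, h2, hm_left_unit, hm_left_unit]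
      have : (Finsupp.single (q.2 ++ [b]) (1 : K))
          = Finsupp.mapDomain (· ++ [b]) (Finsupp.single q.2 1) := by
        rw [Finsupp.mapDomain_single]
      rw [this, tens_mapRight, Finsupp.mapDomain_smul]

lemma pairMul_concat_concat (br : A → A → A)
    (hm_rec : ∀ u v a b, m (u ++ [a]) (v ++ [b]) =
        Finsupp.mapDomain (· ++ [a]) (m u (v ++ [b]))
        + Finsupp.mapDomain (· ++ [b]) (m (u ++ [a]) v)
        + Finsupp.mapDomain (· ++ [br a b]) (m u v))
    (a b : A) (x y : (List A × List A) →₀ K) :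
    pairMul m (Finsupp.mapDomain (Prod.map id (· ++ [a])) x)
        (Finsupp.mapDomain (Prod.map id (· ++ [b])) y)
      = Finsupp.mapDomain (Prod.map id (· ++ [a]))
          (pairMul m x (Finsupp.mapDomain (Prod.map id (· ++ [b])) y))
        + Finsupp.mapDomain (Prod.map id (· ++ [b]))
            (pairMul m (Finsupp.mapDomain (Prod.map id (· ++ [a])) x) y)
        + Finsupp.mapDomain (Prod.map id (· ++ [br a b])) (pairMul m x y) := by
  induction x using Finsupp.induction_linear with
  | zero => simp [pairMul_zero_left]
  | add x x' hx hx' =>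
      simp only [Finsupp.mapDomain_add, pairMul_add_left] at *
      rw [hx, hx']
      abel
  | single p c =>
      induction y using Finsupp.induction_linear with
      | zero => simp [pairMul_zero_right]
      | add y y' hy hy' =>
          simp only [Finsupp.mapDomain_add, pairMul_add_right] at *
          rw [hy, hy']
          abel
      | single q d =>
          rw [Finsupp.mapDomain_single, Finsupp.mapDomain_single]
          rw [pairMul_single_single, pairMul_single_single, pairMul_single_single,
            pairMul_single_single]
          have hp1 : (Prod.map id (· ++ [a]) p).1 = p.1 := rfl
          have hp2 : (Prod.map id (· ++ [a]) p).2 = p.2 ++ [a] := rfl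
          have hq1 : (Prod.map id (· ++ [b]) q).1 = q.1 := rfl
          have hq2 : (Prod.map id (· ++ [b]) q).2 = q.2 ++ [b] := rfl
          rw [hp1, hp2, hq1, hq2]
          rw [hm_rec p.2 q.2 a b, tens_add_right, tens_add_right,
            tens_mapRight, tens_mapRight, tens_mapRight, smul_add, smul_add,
            Finsupp.mapDomain_smul, Finsupp.mapDomain_smul, Finsupp.mapDomain_smul]

/-- Splitting off the last term of `deconcat (u ++ [a])`. -/
lemma deconcat_concat (u : List A) (a : A) :
    (deconcat (u ++ [a]) : (List A × List A) →₀ K)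
      = Finsupp.mapDomain (Prod.map id (· ++ [a])) (deconcat u)
        + Finsupp.single (u ++ [a], ([] : List A)) 1 := by
  unfold deconcat
  have hlen : (u ++ [a]).length = u.length + 1 := by simp
  rw [hlen, Finset.sum_range_succ]
  congr 1
  · rw [Finsupp.mapDomain_finset_sum]
    apply Finset.sum_congr rfl
    intro i hi
    rw [Finset.mem_range] at hi
    have hile : i ≤ u.length := Nat.lt_succ_iff.mp hi
    rw [Finsupp.mapDomain_single,
      List.take_append_of_le_length hile, List.drop_append_of_le_length hile]
    rfl
  · have h1 : (u ++ [a]).take (u.length + 1) = u ++ [a] := by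
      rw [← hlen, List.take_length]
    have h2 : (u ++ [a]).drop (u.length + 1) = [] := by
      rw [← hlen, List.drop_length]
    rw [h1, h2]

lemma deconcat_nil : (deconcat ([] : List A) : (List A × List A) →₀ K)
    = Finsupp.single (([] : List A), ([] : List A)) 1 := by
  simp [deconcat]

lemma deconcatExt_single (w : List A) (c : K) :
    deconcatExt (Finsupp.single w c) = c • deconcat w := by
  unfold deconcatExt
  rw [Finsupp.sum_single_index]
  rw [zero_smul]

lemma deconcatExt_zero : deconcatExt (0 : List A →₀ K) = 0 := by
  simp [deconcatExt, Finsupp.sum_zero_index]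

lemma deconcatExt_add (x y : List A →₀ K) :
    deconcatExt (x + y) = deconcatExt x + deconcatExt y :=
  Finsupp.sum_add_index' (fun w => zero_smul _ _) (fun w c d => add_smul _ _ _)

lemma deconcatExt_mapDomain_concat (a : A) (x : List A →₀ K) :
    deconcatExt (Finsupp.mapDomain (· ++ [a]) x)
      = Finsupp.mapDomain (Prod.map id (· ++ [a])) (deconcatExt x)
        + Finsupp.mapDomain (fun w => (w ++ [a], ([] : List A))) x := by
  induction x using Finsupp.induction_linear with
  | zero => simp [deconcatExt_zero]
  | add x x' hx hx' =>
      rw [Finsupp.mapDomain_add, deconcatExt_add, hx, hx', deconcatExt_add,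
        Finsupp.mapDomain_add, Finsupp.mapDomain_add]
      abel
  | single w c =>
      rw [Finsupp.mapDomain_single, Finsupp.mapDomain_single, deconcatExt_single,
        deconcat_concat, deconcatExt_single, smul_add, Finsupp.mapDomain_smul]
      congr 1
      rw [Finsupp.smul_single, smul_eq_mul, mul_one]

end MainLemmas

/-- **`(K⟨A⟩, *, Δ)` is a bialgebra:** the deconcatenation coproduct is an algebra
morphism for the quasi-shuffle product, `Δ(u * v) = Δ(u) * Δ(v)`. -/
theorem deconcat_quasiShuffle_bialgebra
    {A : Type} [DecidableEq A] {K : Type} [Field K] [CharZero K]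
    (br : A → A → A)
    (hbr_comm : ∀ a b, br a b = br b a)
    (hbr_assoc : ∀ a b c, br (br a b) c = br a (br b c))
    (m : List A → List A → (List A →₀ K))
    (hm_right_unit : ∀ u, m u [] = Finsupp.single u 1)
    (hm_left_unit : ∀ v, m [] v = Finsupp.single v 1)
    (hm_rec : ∀ u v a b, m (u ++ [a]) (v ++ [b]) =
        Finsupp.mapDomain (· ++ [a]) (m u (v ++ [b]))
        + Finsupp.mapDomain (· ++ [b]) (m (u ++ [a]) v)
        + Finsupp.mapDomain (· ++ [br a b]) (m u v)) :
    ∀ u v : List A, deconcatExt (m u v) = pairMul m (deconcat u) (deconcat v) := by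
  have base_right : ∀ u : List A,
      deconcatExt (m u []) = pairMul m (deconcat u) (deconcat []) := by
    intro u
    rw [hm_right_unit, deconcatExt_single, one_smul, deconcat_nil,
      pairMul_nil_right m hm_right_unit]
  have base_left : ∀ v : List A,
      deconcatExt (m [] v) = pairMul m (deconcat []) (deconcat v) := by
    intro v
    rw [hm_left_unit, deconcatExt_single, one_smul, deconcat_nil,
      pairMul_nil_left m hm_left_unit]
  have key : ∀ (n : ℕ) (u v : List A), u.length + v.length ≤ n →
      deconcatExt (m u v) = pairMul m (deconcat u) (deconcat v) := by
    intro n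
    induction n with
    | zero =>
        intro u v h
        have hu : u = [] := List.length_eq_zero_iff.mp (by omega)
        subst hu
        exact base_left v
    | succ n ih =>
        intro u v h
        rcases List.eq_nil_or_concat v with rfl | ⟨v', b, rfl⟩
        · exact base_right u
        rcases List.eq_nil_or_concat u with rfl | ⟨u', a, rfl⟩
        · exact base_left _
        rw [List.concat_eq_append, List.concat_eq_append] at *
        have hlu : (u' ++ [a]).length = u'.length + 1 := by simp
        have hlv : (v' ++ [b]).length = v'.length + 1 := by simp
        have ihX : deconcatExt (m u' (v' ++ [b]))
            = pairMul m (deconcat u') (deconcat (v' ++ [b])) := by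
          apply ih; rw [hlu] at h; omega
        have ihY : deconcatExt (m (u' ++ [a]) v')
            = pairMul m (deconcat (u' ++ [a])) (deconcat v') := by
          apply ih; rw [hlv] at h; omega
        have ihZ : deconcatExt (m u' v')
            = pairMul m (deconcat u') (deconcat v') := by
          apply ih; rw [hlu, hlv] at h; omega
        rw [hm_rec u' v' a b, deconcatExt_add, deconcatExt_add,
          deconcatExt_mapDomain_concat, deconcatExt_mapDomain_concat,
          deconcatExt_mapDomain_concat, ihX, ihY, ihZ,
          deconcat_concat u' a, deconcat_concat v' b]
        simp only [pairMul_add_left, pairMul_add_right, Finsupp.mapDomain_add]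
        rw [pairMul_concat_concat m br hm_rec,
          pairMul_concat_right m hm_right_unit,
          pairMul_concat_left m hm_left_unit,
          pairMul_boundary m hm_right_unit hm_left_unit,
          hm_rec u' v' a b, Finsupp.mapDomain_add, Finsupp.mapDomain_add,
          ← Finsupp.mapDomain_comp, ← Finsupp.mapDomain_comp,
          ← Finsupp.mapDomain_comp]
        have hcompa : ((fun w => (w, ([] : List A))) ∘ (· ++ [a]))
            = fun w => (w ++ [a], ([] : List A)) := rfl
        have hcompb : ((fun w => (w, ([] : List A))) ∘ (· ++ [b]))
            = fun w => (w ++ [b], ([] : List A)) := rfl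
        have hcompc : ((fun w => (w, ([] : List A))) ∘ (· ++ [br a b]))
            = fun w => (w ++ [br a b], ([] : List A)) := rfl
        rw [hcompa, hcompb, hcompc]
        abel
  intro u v
  exact key (u.length + v.length) u v le_rfl
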